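/- Let I ⊂ ℝ be compact. There exists C > 0 such that for all s ∈ I, N ∈ ℤ_{≥1}, r ∈ ℝ with r ≤ 4N, and integers 0 ≤ a ≤ N: (cosh(s/√N) + 1 - r/(2N))^a ≤ 2^a · C · e^{-(a/(4N))·r + |r|/(2N)}. -/

import Mathlib

open Real

lemma sinh_sq_le (t : ℝ) : Real.sinh t ^ 2 ≤ t ^ 2 * Real.exp (2 * |t|) := by
  have key : ∀ x : ℝ, 0 ≤ x → Real.sinh x ≤ x * Real.exp x := by
    intro x hx
    have h1 : 1 - Real.exp (-(2 * x)) ≤ 2 * x := by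
      nlinarith [Real.add_one_le_exp (-(2 * x))]
    have hex : 0 < Real.exp x := Real.exp_pos x
    have : Real.exp x - Real.exp (-x) ≤ 2 * x * Real.exp x := by
      have : Real.exp (-x) = Real.exp x * Real.exp (-(2*x)) := by
        rw [← Real.exp_add]; ring_nf
      nlinarith
    rw [Real.sinh_eq]; linarith
  have h := key |t| (abs_nonneg t)
  have hs : Real.sinh |t| ^ 2 = Real.sinh t ^ 2 := by
    rcases abs_cases t with ⟨h1, _⟩ | ⟨h1, _⟩ <;> rw [h1] <;> simp [Real.sinh_neg]
  have hsn : 0 ≤ Real.sinh |t| := Real.sinh_nonneg_iff.mpr (abs_nonneg t)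
  have : Real.sinh |t| ^ 2 ≤ (|t| * Real.exp |t|) ^ 2 := by
    apply pow_le_pow_left₀ hsn h
  calc Real.sinh t ^ 2 = Real.sinh |t| ^ 2 := hs.symm
    _ ≤ (|t| * Real.exp |t|) ^ 2 := this
    _ = t ^ 2 * Real.exp (2 * |t|) := by
        rw [mul_pow, sq_abs, ← Real.exp_nat_mul]
        norm_num [Real.exp_nat_mul, ← Real.exp_add]

/-- For `I ⊂ ℝ` compact there is `C > 0` such that for all `s ∈ I`, `N ≥ 1`,
`r ≤ 4N` and integers `0 ≤ a ≤ N`,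
`(cosh(s/√N) + 1 - r/(2N))^a ≤ 2^a C e^{-(a/(4N)) r + |r|/(2N)}`. -/
theorem cosh_factor_bound (I : Set ℝ) (hI : IsCompact I) :
    ∃ C : ℝ, 0 < C ∧ ∀ s ∈ I, ∀ N : ℕ, 1 ≤ N → ∀ r : ℝ, r ≤ 4 * N → ∀ a : ℕ, a ≤ N →
      (Real.cosh (s / Real.sqrt N) + 1 - r / (2 * N)) ^ a ≤
        2 ^ a * C * Real.exp (-((a : ℝ) / (4 * N)) * r + |r| / (2 * N)) := by
  obtain ⟨M0, hM0⟩ := hI.isBounded.subset_closedBall 0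
  set M : ℝ := max M0 0 with hMdef
  have hMnn : 0 ≤ M := le_max_right _ _
  set C' : ℝ := M ^ 2 / 4 * Real.exp M with hC'def
  have hC'nn : 0 ≤ C' := by positivity
  refine ⟨Real.exp C', Real.exp_pos _, ?_⟩
  intro s hs N hN r hr a ha
  have hsM : |s| ≤ M := by
    have := hM0 hs
    simp only [Metric.mem_closedBall, Real.dist_eq, sub_zero] at this
    exact le_trans this (le_max_left _ _)
  have hNpos : (0 : ℝ) < N := by exact_mod_cast hN
  have hsqrtN : 1 ≤ Real.sqrt N := by
    rw [show (1:ℝ) = Real.sqrt 1 by simp]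
    exact Real.sqrt_le_sqrt (by exact_mod_cast hN)
  have hsqrt_pos : 0 < Real.sqrt N := lt_of_lt_of_le one_pos hsqrtN
  set t : ℝ := s / (2 * Real.sqrt N) with htdef
  -- rewrite cosh
  have hco : Real.cosh (s / Real.sqrt N) + 1 = 2 * (1 + Real.sinh t ^ 2) := by
    have : s / Real.sqrt N = 2 * t := by
      field_simp [htdef]
      rw [htdef]; field_simp
    rw [this, Real.cosh_two_mul, Real.cosh_sq]
    ring
  set u : ℝ := Real.sinh t ^ 2 - r / (4 * N) with hudef
  have hru : r / (4 * N) ≤ 1 := by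
    rw [div_le_one (by positivity)]
    linarith
  have h1u : 0 ≤ 1 + u := by
    have : 0 ≤ Real.sinh t ^ 2 := sq_nonneg _
    simp only [hudef]; linarith
  have hrewrite : Real.cosh (s / Real.sqrt N) + 1 - r / (2 * N) = 2 * (1 + u) := by
    rw [hco, hudef]
    field_simp
    ring
  have step1 : (2 * (1 + u)) ^ a ≤ 2 ^ a * Real.exp ((a : ℝ) * u) := by
    rw [mul_pow]
    gcongr
    · calc (1 + u) ^ a ≤ Real.exp u ^ a := by
            apply pow_le_pow_left₀ h1u
            linarith [Real.add_one_le_exp u]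
        _ = Real.exp ((a : ℝ) * u) := by rw [← Real.exp_nat_mul]
  -- bound a * sinh² t ≤ C'
  have hts : t ^ 2 = s ^ 2 / (4 * N) := by
    rw [htdef, div_pow, mul_pow, Real.sq_sqrt (le_of_lt hNpos)]
    norm_num
  have htabs : 2 * |t| ≤ M := by
    have : |t| = |s| / (2 * Real.sqrt N) := by
      rw [htdef, abs_div]
      congr 1
      rw [abs_of_pos (by positivity)]
    rw [this]
    rw [div_le_iff₀ (by positivity)] at *
    calc 2 * (|s| / (2 * Real.sqrt N)) = |s| / Real.sqrt N := by ring
      _ ≤ |s| := by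
          rw [div_le_iff₀ hsqrt_pos]
          nlinarith [abs_nonneg s]
      _ ≤ M := hsM
  have hkey : (a : ℝ) * Real.sinh t ^ 2 ≤ C' := by
    have h1 : Real.sinh t ^ 2 ≤ t ^ 2 * Real.exp (2 * |t|) := sinh_sq_le t
    have h2 : Real.exp (2 * |t|) ≤ Real.exp M := Real.exp_le_exp.mpr htabs
    have haN : (a : ℝ) ≤ N := by exact_mod_cast ha
    have hann : (0:ℝ) ≤ a := Nat.cast_nonneg a
    have ht2 : (0:ℝ) ≤ t ^ 2 := sq_nonneg t
    have hexpnn : (0:ℝ) < Real.exp (2*|t|) := Real.exp_pos _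
    calc (a : ℝ) * Real.sinh t ^ 2 ≤ (N : ℝ) * (t ^ 2 * Real.exp (2 * |t|)) := by
          apply mul_le_mul haN h1 (sq_nonneg _) (le_of_lt hNpos)
      _ = s ^ 2 / 4 * Real.exp (2 * |t|) := by rw [hts]; field_simp
      _ ≤ M ^ 2 / 4 * Real.exp M := by
          apply mul_le_mul _ h2 (le_of_lt hexpnn) (by positivity)
          have := sq_abs s
          nlinarith [abs_nonneg s]
  have step2 : Real.exp ((a : ℝ) * u) ≤
      Real.exp C' * Real.exp (-((a : ℝ) / (4 * N)) * r + |r| / (2 * N)) := by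
    rw [← Real.exp_add, Real.exp_le_exp]
    have habs : 0 ≤ |r| / (2 * N) := by positivity
    have : (a : ℝ) * u = (a : ℝ) * Real.sinh t ^ 2 + (-((a : ℝ) / (4 * N)) * r) := by
      rw [hudef]; field_simp; ring
    rw [this]
    linarith
  calc (Real.cosh (s / Real.sqrt N) + 1 - r / (2 * N)) ^ a
      = (2 * (1 + u)) ^ a := by rw [hrewrite]
    _ ≤ 2 ^ a * Real.exp ((a : ℝ) * u) := step1
    _ ≤ 2 ^ a * (Real.exp C' * Real.exp (-((a : ℝ) / (4 * N)) * r + |r| / (2 * N))) := by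
        exact mul_le_mul_of_nonneg_left step2 (pow_nonneg (by norm_num) a)
    _ = 2 ^ a * Real.exp C' * Real.exp (-((a : ℝ) / (4 * N)) * r + |r| / (2 * N)) := by ring
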